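/- In the diagonal train construction, for every j ≥ 1 the following hold. On the engine: |a_{n,p_j}/b_{n,p_j}|^{(−1)^{j+1}} ≥ 1 and |a_{q_j,n}/b_{q_j,n}|^{(−1)^{j+1}} ≥ 1 for all p_j ≤ n ≤ q_j, and D^{−k^j}/C ≥ |a_{q_j,p_j}/b_{q_j,p_j}|^{(−1)^{j+1}} ≥ D^{−k^j}. Moreover, for every j ≥ 0 and all q_j ≤ m ≤ n ≤ p_{j+1}: |a_{n,m}/b_{n,m}|^{(−1)^{j+1}} > D^{k^{j+1}}, and |a_{p_{j+1},q_j}/b_{p_{j+1},q_j}|^{(−1)^{j+1}} ≥ 1. -/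

import Mathlib

open Set Filter Metric Topology

noncomputable section

/-- `absProd a m n = |a_{n,m}| = |a_{n-1}| ⋯ |a_m|`. -/
def absProd (a : ℕ → ℂ) (m n : ℕ) : ℝ :=
  ∏ i ∈ Finset.Ico m n, ‖a i‖

/-- `trainRatio a b j m n = |a_{n,m}/b_{n,m}| ^ ((-1)^j)`. -/
def trainRatio (a b : ℕ → ℂ) (j m n : ℕ) : ℝ :=
  (absProd a m n / absProd b m n) ^ ((-1 : ℤ) ^ j)

/-- A pair `(P,Q)` is admissible at stage `j`: `q_j ≤ P ≤ Q` and
`|a_{Q,P}/b_{Q,P}|^{(-1)^j} ≥ D^{-k^{j+1}}`. -/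
def ValidPair (a b : ℕ → ℂ) (D : ℝ) (k : ℕ) (qj j P Q : ℕ) : Prop :=
  qj ≤ P ∧ P ≤ Q ∧ D ^ (-((k : ℤ) ^ (j + 1))) ≤ trainRatio a b j P Q

/-- The recursive definition of the diagonal trains: `p 0 = 0`, `q 0 = 2`; at each stage
`(p (j+1), q (j+1))` is an admissible pair, `q (j+1)` is minimal among admissible pairs,
and `p (j+1)` maximizes the ratio for this choice of `q (j+1)`. -/
def DiagonalTrains (a b : ℕ → ℂ) (D : ℝ) (k : ℕ) (p q : ℕ → ℕ) : Prop :=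
  p 0 = 0 ∧ q 0 = 2 ∧
  ∀ j, ValidPair a b D k (q j) j (p (j + 1)) (q (j + 1)) ∧
    (∀ P Q, ValidPair a b D k (q j) j P Q → q (j + 1) ≤ Q) ∧
    (∀ P, ValidPair a b D k (q j) j P (q (j + 1)) →
      trainRatio a b j P (q (j + 1)) ≤ trainRatio a b j (p (j + 1)) (q (j + 1)))

/-- Properties of the diagonal trains: the estimates on the engine `[p_j, q_j]`
(for `j ≥ 1`) and on the wagons `[q_j, p_{j+1}]` (for all `j ≥ 0`). -/
theorem diagonal_train_properties
    (C D : ℝ) (a b : ℕ → ℂ) (k : ℕ) (p q : ℕ → ℕ)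
    (hC : 0 < C) (hCD : C < D) (hD : D < 1) (hk : 2 ≤ k)
    (hab : ∀ n, C ≤ ‖a n‖ ∧ ‖a n‖ ≤ D ∧
      C ≤ ‖b n‖ ∧ ‖b n‖ ≤ D)
    (ht : DiagonalTrains a b D k p q) :
    (∀ j, 1 ≤ j →
      (∀ n, p j ≤ n → n ≤ q j →
        1 ≤ trainRatio a b (j + 1) (p j) n ∧ 1 ≤ trainRatio a b (j + 1) n (q j)) ∧
      trainRatio a b (j + 1) (p j) (q j) ≤ D ^ (-((k : ℤ) ^ j)) / C ∧
      D ^ (-((k : ℤ) ^ j)) ≤ trainRatio a b (j + 1) (p j) (q j)) ∧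
    (∀ j, ∀ m n, q j ≤ m → m ≤ n → n ≤ p (j + 1) →
      D ^ ((k : ℤ) ^ (j + 1)) < trainRatio a b (j + 1) m n) ∧
    (∀ j, 1 ≤ trainRatio a b (j + 1) (q j) (p (j + 1))) := by
  obtain ⟨hp0, hq0, hrec⟩ := ht
  have hD0 : (0:ℝ) < D := lt_trans hC hCD
  have haps : ∀ m n, 0 < absProd a m n := by
    intro m n; unfold absProd
    exact Finset.prod_pos fun i _ => lt_of_lt_of_le hC (hab i).1
  have hbps : ∀ m n, 0 < absProd b m n := by
    intro m n; unfold absProd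
    exact Finset.prod_pos fun i _ => lt_of_lt_of_le hC (hab i).2.2.1
  have hr : ∀ m n, 0 < absProd a m n / absProd b m n := fun m n => div_pos (haps m n) (hbps m n)
  have htpos : ∀ j m n, 0 < trainRatio a b j m n := fun j m n => zpow_pos (hr m n) _
  have hmul : ∀ j m n l, m ≤ n → n ≤ l →
      trainRatio a b j m l = trainRatio a b j m n * trainRatio a b j n l := by
    intro j m n l h1 h2
    unfold trainRatio
    rw [← mul_zpow]; congr 1
    unfold absProd
    rw [div_mul_div_comm, Finset.prod_Ico_consecutive _ h1 h2, Finset.prod_Ico_consecutive _ h1 h2]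
  have hself : ∀ j n, trainRatio a b j n n = 1 := by
    intro j n; unfold trainRatio absProd; simp
  have hinv : ∀ j m n, trainRatio a b (j+1) m n = (trainRatio a b j m n)⁻¹ := by
    intro j m n; unfold trainRatio
    rw [pow_succ, zpow_mul, zpow_neg_one]
  have hpar : ∀ j m n, trainRatio a b (j+1+1) m n = trainRatio a b j m n := by
    intro j m n; unfold trainRatio; congr 1; ring
  have hstep : ∀ j n, trainRatio a b j n (n+1) ≤ D / C := by
    intro j n
    have ha0 : 0 < ‖a n‖ := lt_of_lt_of_le hC (hab n).1
    have hb0 : 0 < ‖b n‖ := lt_of_lt_of_le hC (hab n).2.2.1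
    have hxa : ‖a n‖ / ‖b n‖ ≤ D / C :=
      div_le_div₀ hD0.le (hab n).2.1 hC (hab n).2.2.1
    have hxb : ‖b n‖ / ‖a n‖ ≤ D / C :=
      div_le_div₀ hD0.le (hab n).2.2.2 hC (hab n).1
    have hIco : absProd a n (n+1) = ‖a n‖ := by
      unfold absProd; rw [Nat.Ico_succ_singleton, Finset.prod_singleton]
    have hIcob : absProd b n (n+1) = ‖b n‖ := by
      unfold absProd; rw [Nat.Ico_succ_singleton, Finset.prod_singleton]
    unfold trainRatio
    rw [hIco, hIcob]
    rcases Nat.even_or_odd j with he | ho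
    · rw [he.neg_one_pow, zpow_one]; exact hxa
    · rw [ho.neg_one_pow, zpow_neg_one, inv_div]; exact hxb
  have hDlt : ∀ j : ℕ, 1 < D ^ (-((k:ℤ) ^ (j+1))) := by
    intro j
    have hcast : ((k:ℤ)^(j+1)) = ((k^(j+1) : ℕ) : ℤ) := by push_cast; ring
    rw [hcast, zpow_neg, zpow_natCast]
    exact (one_lt_inv₀ (pow_pos hD0 _)).mpr (pow_lt_one₀ hD0.le hD (pow_ne_zero _ (by omega)))
  have hplt : ∀ j, p (j+1) < q (j+1) := by
    intro j
    obtain ⟨⟨h1, h2, hval⟩, -, -⟩ := hrec j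
    rcases lt_or_eq_of_le h2 with h | h
    · exact h
    · exfalso; rw [h, hself] at hval; exact absurd hval (not_le.mpr (hDlt j))
  refine ⟨?_, ?_, ?_⟩
  · -- engine
    intro j hj
    obtain ⟨i, rfl⟩ : ∃ i, j = i + 1 := ⟨j - 1, by omega⟩
    obtain ⟨⟨hq_le_p, hp_le_q, hval⟩, hmin, hmax⟩ := hrec i
    simp only [hpar]
    have hpq : p (i+1) < q (i+1) := hplt i
    refine ⟨?_, ?_, hval⟩
    · intro n hn1 hn2
      constructor
      · have hle : trainRatio a b i n (q (i+1)) ≤ trainRatio a b i (p (i+1)) (q (i+1)) := by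
          rcases le_or_gt (D ^ (-((k:ℤ)^(i+1)))) (trainRatio a b i n (q (i+1))) with h | h
          · exact hmax n ⟨le_trans hq_le_p hn1, hn2, h⟩
          · exact le_trans h.le hval
        have heq := hmul i (p (i+1)) n (q (i+1)) hn1 hn2
        nlinarith [htpos i (p (i+1)) n, htpos i n (q (i+1))]
      · by_contra hcon
        push_neg at hcon
        have hgt : D ^ (-((k:ℤ)^(i+1))) ≤ trainRatio a b i (p (i+1)) n := by
          have heq := hmul i (p (i+1)) n (q (i+1)) hn1 hn2
          nlinarith [htpos i (p (i+1)) n, htpos i n (q (i+1))]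
        have hQn : q (i+1) ≤ n := hmin (p (i+1)) n ⟨hq_le_p, hn1, hgt⟩
        have hnQ : n = q (i+1) := le_antisymm hn2 hQn
        rw [hnQ, hself] at hcon
        exact lt_irrefl 1 hcon
    · have h1 : p (i+1) ≤ q (i+1) - 1 := by omega
      have h2 : q (i+1) - 1 ≤ q (i+1) := by omega
      have hnv : trainRatio a b i (p (i+1)) (q (i+1) - 1) < D ^ (-((k:ℤ)^(i+1))) := by
        by_contra hcon
        push_neg at hcon
        have := hmin (p (i+1)) (q (i+1) - 1) ⟨hq_le_p, h1, hcon⟩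
        omega
      have hs : trainRatio a b i (q (i+1) - 1) (q (i+1)) ≤ D / C := by
        have := hstep i (q (i+1) - 1)
        rwa [show q (i+1) - 1 + 1 = q (i+1) from by omega] at this
      have heq := hmul i (p (i+1)) (q (i+1) - 1) (q (i+1)) h1 h2
      have hposD : (0:ℝ) < D ^ (-((k:ℤ)^(i+1))) := zpow_pos hD0 _
      calc trainRatio a b i (p (i+1)) (q (i+1))
          = trainRatio a b i (p (i+1)) (q (i+1) - 1) * trainRatio a b i (q (i+1) - 1) (q (i+1)) := heq
        _ ≤ D ^ (-((k:ℤ)^(i+1))) * (D/C) :=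
            mul_le_mul hnv.le hs (htpos i (q (i+1) - 1) (q (i+1))).le hposD.le
        _ = D ^ (-((k:ℤ)^(i+1))) * D / C := by ring
        _ ≤ D ^ (-((k:ℤ)^(i+1))) * 1 / C := by gcongr
        _ = D ^ (-((k:ℤ)^(i+1))) / C := by ring
  · -- wagons: strict bound
    intro j m n hm hmn hn
    obtain ⟨⟨hq_le_p, hp_le_q, hval⟩, hmin, hmax⟩ := hrec j
    have hlt : trainRatio a b j m n < D ^ (-((k:ℤ)^(j+1))) := by
      by_contra hcon
      push_neg at hcon
      have := hmin m n ⟨hm, hmn, hcon⟩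
      have := hplt j
      omega
    rw [hinv, show ((k:ℤ)^(j+1)) = -(-((k:ℤ)^(j+1))) by ring, zpow_neg]
    exact inv_strictAnti₀ (htpos j m n) hlt
  · -- wagons: final
    intro j
    obtain ⟨⟨hq_le_p, hp_le_q, hval⟩, hmin, hmax⟩ := hrec j
    rw [hinv]
    have hle1 : trainRatio a b j (q j) (p (j+1)) ≤ 1 := by
      by_contra hcon
      push_neg at hcon
      have heq := hmul j (q j) (p (j+1)) (q (j+1)) hq_le_p hp_le_q
      have hvalid : ValidPair a b D k (q j) j (q j) (q (j+1)) := by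
        refine ⟨le_refl _, le_trans hq_le_p hp_le_q, ?_⟩
        nlinarith [htpos j (q j) (p (j+1)), htpos j (p (j+1)) (q (j+1))]
      have := hmax (q j) hvalid
      nlinarith [htpos j (q j) (p (j+1)), htpos j (p (j+1)) (q (j+1))]
    exact (one_le_inv₀ (htpos j (q j) (p (j+1)))).mpr hle1
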